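/- arXiv:2406.05072 — 3 statements merged into one kernel-verified Lean document; each statement's English description precedes it below -/
import Mathlib

section
/- Let V be a real vector space, L ⊆ V^# a subspace separating points, and suppose D ⊆ L satisfies: there exists n₀ ∈ ℕ such that the n₀-fold weak-* sequential closure of span D equals L. If u : Ω → V is a map on a probability space such that ℓ ∘ u is measurable for every ℓ ∈ D, then u is 𝒜-σ(L)-measurable. -/
/-- Weak-* sequential closure of a set of linear functionals: all functionals that are
pointwise limits (on `V`) of sequences from `S`. -/
def scl {V : Type*} [AddCommGroup V] [Module ℝ V]
    (S : Set (Module.Dual ℝ V)) : Set (Module.Dual ℝ V) :=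
  {ℓ | ∃ g : ℕ → Module.Dual ℝ V, (∀ n, g n ∈ S) ∧
    ∀ v, Filter.Tendsto (fun n => g n v) Filter.atTop (nhds (ℓ v))}

theorem stmt5 {V Ω : Type*} [AddCommGroup V] [Module ℝ V] [MeasurableSpace Ω]
    (L : Submodule ℝ (Module.Dual ℝ V))
    (hsep : ∀ v : V, v ≠ 0 → ∃ ℓ ∈ L, ℓ v ≠ 0)
    (D : Set (Module.Dual ℝ V)) (hDL : D ⊆ L) (n₀ : ℕ)
    (hcl : scl^[n₀] ((Submodule.span ℝ D : Submodule ℝ (Module.Dual ℝ V)) :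
        Set (Module.Dual ℝ V)) = L)
    (u : Ω → V) (hmeas : ∀ ℓ ∈ D, Measurable fun ω => ℓ (u ω)) :
    @Measurable Ω V _
      (⨆ ℓ ∈ (L : Set (Module.Dual ℝ V)),
        MeasurableSpace.comap (ℓ : V → ℝ) inferInstance) u := by
  have key : ∀ ℓ ∈ L, Measurable fun ω => ℓ (u ω) := by
    have hspan : ∀ ℓ ∈ Submodule.span ℝ D, Measurable fun ω => ℓ (u ω) := by
      intro ℓ hℓ
      induction hℓ using Submodule.span_induction with
      | mem x hx => exact hmeas x hx
      | zero => simpa using measurable_const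
      | add x y _ _ hx hy => simpa [Pi.add_def] using hx.add hy
      | smul c x _ hx => simpa using hx.const_mul c
    have hstep : ∀ (S : Set (Module.Dual ℝ V)),
        (∀ ℓ ∈ S, Measurable fun ω => ℓ (u ω)) →
        ∀ ℓ ∈ scl S, Measurable fun ω => ℓ (u ω) := by
      intro S hS ℓ hℓ
      obtain ⟨g, hg, hlim⟩ := hℓ
      exact measurable_of_tendsto_metrizable' Filter.atTop
        (fun n => hS (g n) (hg n))
        (tendsto_pi_nhds.mpr fun ω => hlim (u ω))
    have : ∀ n, ∀ ℓ ∈ scl^[n] ((Submodule.span ℝ D :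
        Submodule ℝ (Module.Dual ℝ V)) : Set (Module.Dual ℝ V)),
        Measurable fun ω => ℓ (u ω) := by
      intro n
      induction n with
      | zero => simpa using hspan
      | succ k ih =>
        rw [Function.iterate_succ_apply']
        exact hstep _ ih
    intro ℓ hℓ
    exact this n₀ ℓ (by rwa [hcl])
  rw [measurable_iff_comap_le, MeasurableSpace.comap_iSup]
  refine iSup_le fun ℓ => ?_
  rw [MeasurableSpace.comap_iSup]
  refine iSup_le fun hℓ => ?_
  rw [MeasurableSpace.comap_comp]
  exact (measurable_iff_comap_le.mp (key ℓ hℓ))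
end

section
/- Let V be a real vector space, L ⊆ V^# a subspace separating points, and D ⊆ L such that the n₀-fold weak-* sequential closure of span D equals L for some n₀ ∈ ℕ. If u : Ω → V satisfies that (ℓ₁∘u, ..., ℓₙ∘u) is jointly Gaussian in ℝⁿ for all n and all ℓ₁,...,ℓₙ ∈ D, then u is a Gaussian random variable with values in (V, σ(L)), i.e., ℓ ∘ u is a univariate Gaussian random variable for every ℓ ∈ L. -/
open MeasureTheory ProbabilityTheory

/-- A real-valued random variable is (possibly degenerate) Gaussian. -/
def IsGaussianRV {Ω : Type*} [MeasurableSpace Ω] (P : Measure Ω) (f : Ω → ℝ) : Prop :=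
  ∃ (m : ℝ) (v : NNReal), Measure.map f P = gaussianReal m v

open MeasureTheory ProbabilityTheory Filter Set Real

noncomputable def Phi (t : ℝ) : ℝ := (gaussianReal 0 1 (Set.Iic t)).toReal

lemma gaussianReal_eq_map (m : ℝ) (v : NNReal) :
    gaussianReal m v = Measure.map (fun x => Real.sqrt v * x + m) (gaussianReal 0 1) := by
  have h1 : Measure.map (fun x : ℝ => Real.sqrt v * x) (gaussianReal 0 1)
      = gaussianReal 0 v := by
    rw [show (fun x : ℝ => Real.sqrt v * x) = (fun x : ℝ => (Real.sqrt v) * x) from rfl,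
      gaussianReal_map_const_mul]
    congr 1
    · ring
    · ext
      simp [Real.sq_sqrt v.2]
  have h2 : Measure.map (fun x : ℝ => x + m) (gaussianReal 0 v) = gaussianReal m v := by
    rw [show (fun x : ℝ => x + m) = (· + m) from rfl, gaussianReal_map_add_const]
    simp
  rw [← h2, ← h1, Measure.map_map (by fun_prop) (by fun_prop)]
  rfl

lemma cdf_gaussian_eq (m : ℝ) (v : NNReal) (hv : v ≠ 0) (t : ℝ) :
    (gaussianReal m v (Set.Iic t)).toReal = Phi ((t - m) / Real.sqrt v) := by
  have hs : (0:ℝ) < Real.sqrt v := Real.sqrt_pos.2 (by exact_mod_cast pos_iff_ne_zero.2 hv)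
  rw [gaussianReal_eq_map m v, Measure.map_apply (by fun_prop) measurableSet_Iic]
  congr 2
  ext x
  simp only [Set.mem_preimage, Set.mem_Iic]
  rw [le_div_iff₀ hs]
  constructor <;> intro h <;> nlinarith

lemma Phi_mono : Monotone Phi := by
  intro a b hab
  exact ENNReal.toReal_mono (measure_ne_top _ _) (measure_mono (Set.Iic_subset_Iic.2 hab))

lemma Phi_nonneg (t : ℝ) : 0 ≤ Phi t := ENNReal.toReal_nonneg

lemma Phi_le_one (t : ℝ) : Phi t ≤ 1 := by
  have := prob_le_one (μ := gaussianReal 0 1) (s := Set.Iic t)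
  unfold Phi
  exact ENNReal.toReal_le_of_le_ofReal zero_le_one (by simpa using this)

lemma Phi_sub_le (a b : ℝ) (hab : a ≤ b) : Phi b - Phi a ≤ (b - a) * (Real.sqrt (2 * π))⁻¹ := by
  have hsplit : gaussianReal 0 1 (Set.Iic b)
      = gaussianReal 0 1 (Set.Iic a) + gaussianReal 0 1 (Set.Ioc a b) := by
    rw [← measure_union (Set.Iic_disjoint_Ioc le_rfl) measurableSet_Ioc,
      Set.Iic_union_Ioc_eq_Iic hab]
  have hioc : (gaussianReal 0 1 (Set.Ioc a b)).toReal ≤ (b - a) * (Real.sqrt (2 * π))⁻¹ := by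
    rw [gaussianReal_apply_eq_integral 0 one_ne_zero, ENNReal.toReal_ofReal
      (integral_nonneg fun x => gaussianPDFReal_nonneg _ _ _)]
    have hle : ∀ x ∈ Set.Ioc a b, gaussianPDFReal 0 1 x ≤ (Real.sqrt (2 * π))⁻¹ := by
      intro x _
      unfold gaussianPDFReal
      simp only [NNReal.coe_one, mul_one, sub_zero]
      have h1 : Real.exp (-x ^ 2 / 2) ≤ 1 := Real.exp_le_one_iff.2 (by nlinarith [sq_nonneg x])
      have h2 : (0:ℝ) ≤ (Real.sqrt (2 * π))⁻¹ := by positivity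
      nlinarith
    calc ∫ x in Set.Ioc a b, gaussianPDFReal 0 1 x
        ≤ ∫ _ in Set.Ioc a b, (Real.sqrt (2 * π))⁻¹ := by
          refine setIntegral_mono_on ((integrable_gaussianPDFReal 0 1).restrict)
            (integrableOn_const measure_Ioc_lt_top.ne) measurableSet_Ioc hle
      _ = (b - a) * (Real.sqrt (2 * π))⁻¹ := by
          rw [setIntegral_const, measureReal_def, Real.volume_Ioc, smul_eq_mul, ENNReal.toReal_ofReal (by linarith)]
  have := ENNReal.toReal_add (measure_ne_top (gaussianReal 0 1) (Set.Iic a))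
    (measure_ne_top (gaussianReal 0 1) (Set.Ioc a b))
  unfold Phi
  rw [hsplit, this]
  linarith

lemma Phi_symm (z : ℝ) : Phi (-z) = 1 - Phi z := by
  have hmap : Measure.map (fun x : ℝ => -1 * x) (gaussianReal 0 1) = gaussianReal 0 1 := by
    rw [gaussianReal_map_const_mul]
    congr 1
    · ring
    · ext; norm_num
  have h1 : gaussianReal 0 1 (Set.Iic (-z)) = gaussianReal 0 1 (Set.Ici z) := by
    conv_lhs => rw [← hmap]
    rw [Measure.map_apply (by fun_prop) measurableSet_Iic]
    congr 1
    ext x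
    simp only [Set.mem_preimage, Set.mem_Iic, Set.mem_Ici]
    constructor <;> intro h <;> linarith
  have hz : gaussianReal 0 1 {z} = 0 :=
    gaussianReal_absolutelyContinuous 0 one_ne_zero (measure_singleton z)
  have h2 : gaussianReal 0 1 (Set.Iio z) = gaussianReal 0 1 (Set.Iic z) :=
    measure_congr (Iio_ae_eq_Iic' hz)
  have h3 : gaussianReal 0 1 (Set.Ici z) = 1 - gaussianReal 0 1 (Set.Iio z) := by
    rw [← Set.compl_Iio, prob_compl_eq_one_sub measurableSet_Iio]
  unfold Phi
  rw [h1, h3, h2, ENNReal.toReal_sub_of_le (prob_le_one) ENNReal.one_ne_top]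
  simp

lemma Phi_zero : Phi 0 = 1 / 2 := by
  have := Phi_symm 0
  rw [neg_zero] at this
  linarith

lemma Phi_tendsto_atTop : Tendsto Phi atTop (nhds 1) := by
  have h := tendsto_measure_Iic_atTop (gaussianReal 0 1)
  rw [measure_univ] at h
  have := (ENNReal.tendsto_toReal (a := 1) ENNReal.one_ne_top).comp h
  exact this

lemma Phi_tendsto_atBot : Tendsto Phi atBot (nhds 0) := by
  have : Tendsto (fun z => 1 - Phi z) atTop (nhds (1 - 1)) :=
    tendsto_const_nhds.sub Phi_tendsto_atTop
  have h2 : Tendsto (fun z => Phi (-z)) atTop (nhds 0) := by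
    simpa [Phi_symm] using this
  have := h2.comp tendsto_neg_atBot_atTop
  simpa [Function.comp_def] using this

lemma Phi_continuous : Continuous Phi := by
  have : LipschitzWith (Real.toNNReal ((Real.sqrt (2 * π))⁻¹)) Phi := by
    refine LipschitzWith.of_dist_le_mul fun a b => ?_
    rw [Real.dist_eq, Real.dist_eq]
    have key : ∀ x y : ℝ, x ≤ y → |Phi y - Phi x| ≤ (Real.sqrt (2*π))⁻¹ * |y - x| := by
      intro x y hxy
      rw [abs_of_nonneg (by linarith [Phi_mono hxy]), abs_of_nonneg (by linarith)]
      linarith [Phi_sub_le x y hxy]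
    rcases le_total a b with h | h
    · rw [abs_sub_comm, abs_sub_comm a b]
      exact (key a b h).trans (by rw [Real.coe_toNNReal _ (by positivity)])
    · exact (key b a h).trans (by rw [Real.coe_toNNReal _ (by positivity)])
  exact this.continuous

open MeasureTheory ProbabilityTheory Filter Set Real

lemma countable_atoms (μ : Measure ℝ) [IsFiniteMeasure μ] : {t : ℝ | μ {t} ≠ 0}.Countable := by
  have h := MeasureTheory.Measure.countable_meas_pos_of_disjoint_iUnion₀ (μ := μ)
    (As := fun t : ℝ => {t}) (fun t => (measurableSet_singleton t).nullMeasurableSet)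
    (fun s t hst => (Set.disjoint_singleton.2 hst).aedisjoint)
  convert h using 1
  ext t
  simp [pos_iff_ne_zero]

lemma iInter_Iic_seq (t : ℝ) : ⋂ k : ℕ, Set.Iic (t + 1/(k+1)) = Set.Iic t := by
  ext x
  simp only [Set.mem_iInter, Set.mem_Iic]
  constructor
  · intro hx
    by_contra hc
    push_neg at hc
    obtain ⟨k, hk⟩ := exists_nat_one_div_lt (sub_pos.2 hc)
    have := hx k
    push_cast at hk this
    linarith
  · intro hx k
    have : (0:ℝ) < 1/(k+1) := by positivity
    linarith

lemma tendsto_measure_Iic_seq (μ : Measure ℝ) [IsFiniteMeasure μ] (t : ℝ) :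
    Tendsto (fun k : ℕ => μ (Set.Iic (t + 1/(k+1)))) atTop (nhds (μ (Set.Iic t))) := by
  have h := tendsto_measure_iInter_atTop (μ := μ)
    (s := fun k : ℕ => Set.Iic (t + 1/(k+1)))
    (fun k => measurableSet_Iic.nullMeasurableSet)
    (fun i j hij => Set.Iic_subset_Iic.2 (by
      have : (1:ℝ)/(j+1) ≤ 1/(i+1) := by
        apply one_div_le_one_div_of_le (by positivity)
        push_cast; linarith [(Nat.cast_le (α := ℝ)).2 hij]
      linarith))
    ⟨0, measure_ne_top _ _⟩
  rw [iInter_Iic_seq] at h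
  exact h

lemma measure_ext_of_cdf_on (μ ν : Measure ℝ) [IsFiniteMeasure μ] [IsFiniteMeasure ν]
    (T : Set ℝ) (hT : Tᶜ.Countable)
    (h : ∀ t ∈ T, μ (Set.Iic t) = ν (Set.Iic t)) : μ = ν := by
  refine Measure.ext_of_Iic μ ν fun t => ?_
  have hpick : ∀ k : ℕ, ∃ s, s ∈ T ∩ Set.Ioo t (t + 1/(k+1)) := by
    intro k
    by_contra hc
    push_neg at hc
    have hsub : Set.Ioo t (t + 1/(k+1)) ⊆ Tᶜ := fun s hs hsT => hc s ⟨hsT, hs⟩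
    have h0 : volume (Set.Ioo t (t + 1/(k+1):ℝ)) = 0 :=
      measure_mono_null hsub (hT.measure_zero volume)
    rw [Real.volume_Ioo, ENNReal.ofReal_eq_zero] at h0
    have : (0:ℝ) < 1/(k+1) := by positivity
    linarith
  choose ts hts using hpick
  have htsT : ∀ k, ts k ∈ T := fun k => (hts k).1
  have h1 : ∀ k, t ≤ ts k := fun k => ((hts k).2).1.le
  have h2 : ∀ k, ts k ≤ t + 1/(k+1) := fun k => ((hts k).2).2.le
  have key : ∀ (ρ : Measure ℝ), IsFiniteMeasure ρ →
      Tendsto (fun k => ρ (Set.Iic (ts k))) atTop (nhds (ρ (Set.Iic t))) := by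
    intro ρ hρ
    refine tendsto_of_tendsto_of_tendsto_of_le_of_le tendsto_const_nhds
      (tendsto_measure_Iic_seq ρ t) ?_ ?_
    · exact fun k => measure_mono (Set.Iic_subset_Iic.2 (h1 k))
    · exact fun k => measure_mono (Set.Iic_subset_Iic.2 (h2 k))
  have hμ := key μ inferInstance
  have hν := key ν inferInstance
  have heq : (fun k => μ (Set.Iic (ts k))) = fun k => ν (Set.Iic (ts k)) :=
    funext fun k => h (ts k) (htsT k)
  rw [heq] at hμ
  exact tendsto_nhds_unique hμ hν

open MeasureTheory ProbabilityTheory Filter Set Real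

lemma tendsto_cdf_of_tendsto {Ω : Type*} [MeasurableSpace Ω]
    (P : Measure Ω) [IsProbabilityMeasure P]
    (X : ℕ → Ω → ℝ) (Y : Ω → ℝ) (hm : ∀ n, Measurable (X n)) (hYm : Measurable Y)
    (hlim : ∀ ω, Tendsto (fun n => X n ω) atTop (nhds (Y ω)))
    (t : ℝ) (ht : Measure.map Y P {t} = 0) :
    Tendsto (fun n => (Measure.map (X n) P (Set.Iic t)).toReal) atTop
      (nhds ((Measure.map Y P (Set.Iic t)).toReal)) := by
  set g : ℝ → ℝ := (Set.Iic t).indicator (fun _ => (1:ℝ)) with hg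
  have hgm : Measurable g := measurable_const.indicator measurableSet_Iic
  have hint : ∀ (Z : Ω → ℝ), Measurable Z →
      ∫ ω, g (Z ω) ∂P = (Measure.map Z P (Set.Iic t)).toReal := by
    intro Z hZ
    rw [← integral_map hZ.aemeasurable hgm.aestronglyMeasurable, hg,
      integral_indicator_const (1:ℝ) measurableSet_Iic, smul_eq_mul, mul_one, measureReal_def]
  have hae : ∀ᵐ ω ∂P, Y ω ≠ t := by
    rw [ae_iff]
    have : {ω | ¬ Y ω ≠ t} = Y ⁻¹' {t} := by ext ω; simp
    rw [this, ← Measure.map_apply hYm (measurableSet_singleton t), ht]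
  have key : Tendsto (fun n => ∫ ω, g (X n ω) ∂P) atTop (nhds (∫ ω, g (Y ω) ∂P)) := by
    refine tendsto_integral_of_dominated_convergence (fun _ => (1:ℝ))
      (fun n => (hgm.comp (hm n)).aestronglyMeasurable)
      (integrable_const 1) (fun n => ae_of_all _ fun ω => ?_) ?_
    · rw [hg]
      rcases le_or_gt (X n ω) t with h | h
      · simp [Set.indicator_of_mem (Set.mem_Iic.2 h)]
      · rw [Set.indicator_of_notMem (by simp only [Set.mem_Iic]; linarith : X n ω ∉ Set.Iic t)]
        norm_num
    · filter_upwards [hae] with ω hω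
      rcases lt_or_gt_of_ne hω with h | h
      · have hev : ∀ᶠ n in atTop, X n ω < t := (hlim ω).eventually_lt_const h
        have hgY : g (Y ω) = 1 := by simp [hg, Set.indicator_of_mem (Set.mem_Iic.2 h.le)]
        rw [hgY]
        refine tendsto_const_nhds.congr' ?_
        filter_upwards [hev] with n hn
        simp [hg, Set.indicator_of_mem (Set.mem_Iic.2 hn.le)]
      · have hev : ∀ᶠ n in atTop, t < X n ω := (hlim ω).eventually_const_lt h
        have hgY : g (Y ω) = 0 := by
          simp [hg, Set.indicator_of_notMem (by simp [Set.mem_Iic]; linarith : Y ω ∉ Set.Iic t)]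
        rw [hgY]
        refine tendsto_const_nhds.congr' ?_
        filter_upwards [hev] with n hn
        simp [hg, Set.indicator_of_notMem (by simp [Set.mem_Iic]; linarith : X n ω ∉ Set.Iic t)]
  have e1 : (fun n => ∫ ω, g (X n ω) ∂P) = fun n => (Measure.map (X n) P (Set.Iic t)).toReal :=
    funext fun n => hint (X n) (hm n)
  rw [e1, hint Y hYm] at key
  exact key
open MeasureTheory ProbabilityTheory Filter Set Real

lemma isGaussian_limit {Ω : Type*} [MeasurableSpace Ω] (P : Measure Ω) [IsProbabilityMeasure P]
    (X : ℕ → Ω → ℝ) (Y : Ω → ℝ) (hm : ∀ n, Measurable (X n))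
    (hG : ∀ n, ∃ (m : ℝ) (v : NNReal), Measure.map (X n) P = gaussianReal m v)
    (hlim : ∀ ω, Filter.Tendsto (fun n => X n ω) Filter.atTop (nhds (Y ω))) :
    ∃ (m : ℝ) (v : NNReal), Measure.map Y P = gaussianReal m v := by
  have hYm : Measurable Y := measurable_of_tendsto_metrizable hm (tendsto_pi_nhds.2 hlim)
  set μY := Measure.map Y P with hμY
  haveI : IsProbabilityMeasure μY := Measure.isProbabilityMeasure_map hYm.aemeasurable
  choose ms vs hmv using hG
  set s : ℕ → ℝ := fun n => Real.sqrt (vs n) with hs_def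
  have hs_nonneg : ∀ n, 0 ≤ s n := fun n => Real.sqrt_nonneg _
  set F : ℝ → ℝ := fun t => (μY (Set.Iic t)).toReal with hF
  set Fn : ℕ → ℝ → ℝ := fun n t => (Measure.map (X n) P (Set.Iic t)).toReal with hFn_def
  have hFn : ∀ n t, Fn n t =
      if vs n = 0 then (if ms n ≤ t then 1 else 0) else Phi ((t - ms n) / s n) := by
    intro n t
    by_cases hv : vs n = 0
    · simp only [hFn_def, hmv n, hv, if_pos, gaussianReal_zero_var]
      rw [Measure.dirac_apply' _ measurableSet_Iic]
      by_cases hle : ms n ≤ t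
      · simp [Set.indicator_of_mem (Set.mem_Iic.2 hle), hle]
      · simp [Set.indicator_of_notMem (fun hc => hle (Set.mem_Iic.1 hc)), hle]
    · simp only [hFn_def]
      rw [hmv n, if_neg hv]
      exact cdf_gaussian_eq (ms n) (vs n) hv t
  have hFn01 : ∀ n t, 0 ≤ Fn n t ∧ Fn n t ≤ 1 := by
    intro n t
    refine ⟨ENNReal.toReal_nonneg, ?_⟩
    exact ENNReal.toReal_le_of_le_ofReal zero_le_one (by simpa using prob_le_one)
  have hsv : ∀ n, vs n ≠ 0 → 0 < s n := by
    intro n hv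
    exact Real.sqrt_pos.2 (by exact_mod_cast pos_iff_ne_zero.2 hv)
  set T : Set ℝ := {t | μY {t} = 0} with hT
  have hTc : Tᶜ.Countable := by
    have h1 := countable_atoms μY
    have h2 : Tᶜ = {t : ℝ | μY {t} ≠ 0} := by ext t; simp [hT]
    rwa [h2]
  have hTne : ∀ (I : Set ℝ), volume I ≠ 0 → (T ∩ I).Nonempty := by
    intro I hI
    rcases Set.eq_empty_or_nonempty (T ∩ I) with he | hne
    · exfalso
      apply hI
      have hsub : I ⊆ Tᶜ := by
        intro x hx hxT
        exact Set.eq_empty_iff_forall_notMem.1 he x ⟨hxT, hx⟩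
      exact measure_mono_null hsub (hTc.measure_zero volume)
    · exact hne
  have hconv : ∀ t ∈ T, Filter.Tendsto (fun n => Fn n t) Filter.atTop (nhds (F t)) :=
    fun t ht => tendsto_cdf_of_tendsto P X Y hm hYm hlim t ht
  have hFmono : Monotone F := fun t1 t2 h =>
    ENNReal.toReal_mono (measure_ne_top _ _) (measure_mono (Set.Iic_subset_Iic.2 h))
  -- find a, b in T with F a < 1/4 < 3/4 < F b
  obtain ⟨a, haT, haF⟩ : ∃ a ∈ T, F a < 1/4 := by
    have hI : (⋂ k : ℕ, Set.Iic (-(k:ℝ))) = ∅ := by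
      ext x
      simp only [Set.mem_iInter, Set.mem_Iic, Set.mem_empty_iff_false, iff_false, not_forall]
      obtain ⟨k, hk⟩ := exists_nat_gt (-x)
      exact ⟨k, by push_neg; linarith⟩
    have h0 := tendsto_measure_iInter_atTop (μ := μY)
      (s := fun k : ℕ => Set.Iic (-(k:ℝ)))
      (fun k => measurableSet_Iic.nullMeasurableSet)
      (fun i j hij => Set.Iic_subset_Iic.2 (neg_le_neg (by exact_mod_cast hij)))
      ⟨0, measure_ne_top _ _⟩
    rw [hI, measure_empty] at h0
    have h1 : Filter.Tendsto (fun k : ℕ => F (-(k:ℝ))) Filter.atTop (nhds 0) := by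
      have := (ENNReal.tendsto_toReal (a := 0) (by simp)).comp h0
      simpa [hF, Function.comp_def] using this
    obtain ⟨k, hk⟩ := (h1.eventually_lt_const (by norm_num : (0:ℝ) < 1/4)).exists
    obtain ⟨a, haT, ha0⟩ := hTne (Set.Iic (-(k:ℝ))) (by rw [Real.volume_Iic]; simp)
    exact ⟨a, haT, lt_of_le_of_lt (hFmono (Set.mem_Iic.1 ha0)) hk⟩
  obtain ⟨b, hbT, hbF⟩ : ∃ b ∈ T, 3/4 < F b := by
    have h0 := tendsto_measure_Iic_atTop (μ := μY)
    rw [measure_univ] at h0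
    have h1 : Filter.Tendsto F Filter.atTop (nhds 1) := by
      have := (ENNReal.tendsto_toReal (a := 1) (by simp)).comp h0
      simpa [hF, Function.comp_def] using this
    obtain ⟨b₀, hb₀⟩ := (h1.eventually_const_lt (by norm_num : (3:ℝ)/4 < 1)).exists
    obtain ⟨b, hbT, hb0⟩ := hTne (Set.Ici b₀) (by rw [Real.volume_Ici]; simp)
    exact ⟨b, hbT, lt_of_lt_of_le hb₀ (hFmono (Set.mem_Ici.1 hb0))⟩
  have hab : a < b := by
    by_contra hc
    push_neg at hc
    have := hFmono hc
    linarith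
  -- eventual bounds on parameters
  set C : ℝ := (Real.sqrt (2 * π))⁻¹ with hC
  have hCpos : 0 < C := by have := Real.pi_pos; rw [hC]; positivity
  set S : ℝ := 2 * C * (b - a) with hS
  have hSpos : 0 < S := by rw [hS]; exact mul_pos (mul_pos two_pos hCpos) (by linarith)
  obtain ⟨N, hN⟩ : ∃ N, ∀ n ≥ N, Fn n a < 1/4 ∧ 3/4 < Fn n b := by
    have h1 := (hconv a haT).eventually_lt_const haF
    have h2 := (hconv b hbT).eventually_const_lt hbF
    rcases (h1.and h2).exists_forall_of_atTop with ⟨N, hN⟩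
    exact ⟨N, fun n hn => hN n hn⟩
  have hbnd : ∀ n ≥ N, ms n ∈ Set.Icc a b ∧ s n ∈ Set.Icc 0 S := by
    intro n hn
    obtain ⟨hna, hnb⟩ := hN n hn
    by_cases hv : vs n = 0
    · have hsn : s n = 0 := by simp [hs_def, hv]
      rw [hFn n a, if_pos hv] at hna
      rw [hFn n b, if_pos hv] at hnb
      have hma : ¬ ms n ≤ a := fun hc => by rw [if_pos hc] at hna; linarith
      have hmb : ms n ≤ b := by
        by_contra hc
        rw [if_neg hc] at hnb; linarith
      exact ⟨⟨(not_le.1 hma).le, hmb⟩, by simp [hsn, hSpos.le]⟩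
    · have hsn := hsv n hv
      rw [hFn n a, if_neg hv] at hna
      rw [hFn n b, if_neg hv] at hnb
      have hma : a ≤ ms n := by
        by_contra hc
        push_neg at hc
        have h0 : (0:ℝ) ≤ (a - ms n) / s n := le_of_lt (div_pos (by linarith) hsn)
        have := Phi_mono h0
        rw [Phi_zero] at this
        linarith
      have hmb : ms n ≤ b := by
        by_contra hc
        push_neg at hc
        have h0 : (b - ms n) / s n ≤ 0 := by
          apply div_nonpos_of_nonpos_of_nonneg <;> [linarith; exact hsn.le]
        have := Phi_mono h0
        rw [Phi_zero] at this
        linarith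
      have hss : s n ≤ S := by
        have hle : (a - ms n) / s n ≤ (b - ms n) / s n := by
          gcongr <;> linarith [hsn.le]
        have hkey := Phi_sub_le _ _ hle
        have heq : (b - ms n) / s n - (a - ms n) / s n = (b - a) / s n := by
          field_simp
          ring
        rw [heq] at hkey
        rw [← hC] at hkey
        have h12 : 1/2 < (b - a) / s n * C := by linarith
        rw [div_mul_eq_mul_div, lt_div_iff₀ hsn] at h12
        rw [hS]; nlinarith
      exact ⟨⟨hma, hmb⟩, ⟨hsn.le, hss⟩⟩
  -- extract convergent subsequence of parameters
  obtain ⟨⟨m, sl⟩, hmem, φ, hφmono, hφlim⟩ :=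
    tendsto_subseq_of_bounded
      ((Metric.isBounded_Icc a b).prod (Metric.isBounded_Icc 0 S))
      (x := fun k => ((ms (N + k), s (N + k)) : ℝ × ℝ))
      (fun k => by
        obtain ⟨h1, h2⟩ := hbnd (N + k) (Nat.le_add_right N k)
        exact Set.mk_mem_prod h1 h2)
  have hmemIcc : m ∈ Set.Icc a b ∧ sl ∈ Set.Icc 0 S := by
    rw [(IsClosed.prod isClosed_Icc isClosed_Icc).closure_eq] at hmem
    exact ⟨hmem.1, hmem.2⟩
  have hsl : 0 ≤ sl := hmemIcc.2.1
  set ψ : ℕ → ℕ := fun k => N + φ k with hψ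
  have hψtop : Filter.Tendsto ψ Filter.atTop Filter.atTop :=
    tendsto_atTop_mono (fun k => Nat.le_add_left (φ k) N) hφmono.tendsto_atTop
  have hmlim : Filter.Tendsto (fun k => ms (ψ k)) Filter.atTop (nhds m) :=
    (continuous_fst.tendsto _).comp hφlim
  have hslim : Filter.Tendsto (fun k => s (ψ k)) Filter.atTop (nhds sl) :=
    (continuous_snd.tendsto _).comp hφlim
  have hconvψ : ∀ t ∈ T, Filter.Tendsto (fun k => Fn (ψ k) t) Filter.atTop (nhds (F t)) :=
    fun t ht => (hconv t ht).comp hψtop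
  set vl : NNReal := ⟨sl^2, sq_nonneg _⟩ with hvl
  refine ⟨m, vl, ?_⟩
  rcases eq_or_lt_of_le hsl with hz | hpos
  · -- degenerate limit: dirac
    have hvl0 : vl = 0 := by
      have hc0 : (vl:ℝ) = 0 := by rw [show ((vl:ℝ)) = sl^2 from rfl, ← hz]; ring
      exact_mod_cast hc0
    rw [hvl0, gaussianReal_zero_var]
    show μY = Measure.dirac m
    have hT'c : (T \ {m})ᶜ.Countable := by
      have he : (T \ {m})ᶜ = Tᶜ ∪ {m} := by
        ext x; simp only [Set.mem_compl_iff, Set.mem_diff, Set.mem_union, Set.mem_singleton_iff]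
        tauto
      rw [he]; exact hTc.union (Set.countable_singleton m)
    refine measure_ext_of_cdf_on μY (Measure.dirac m) (T \ {m}) hT'c ?_
    intro t ht
    obtain ⟨htT, htm⟩ := ht
    have htm' : t ≠ m := by simpa using htm
    refine (ENNReal.toReal_eq_toReal_iff' (measure_ne_top _ _) (measure_ne_top _ _)).1 ?_
    rcases lt_or_gt_of_ne htm' with hlt | hgt
    · have hzero : Filter.Tendsto (fun k => Fn (ψ k) t) Filter.atTop (nhds 0) := by
        refine tendsto_order.2 ⟨?_, ?_⟩
        · intro l hl
          exact Filter.Eventually.of_forall fun k => lt_of_lt_of_le hl (hFn01 _ _).1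
        · intro w hw
          have h4 : ∀ᶠ z in Filter.atBot, Phi z < w := Phi_tendsto_atBot.eventually_lt_const hw
          obtain ⟨R₀, hR₀⟩ := h4.exists_forall_of_atBot
          set R := min R₀ (-1) with hRdef
          have hR1 : R ≤ -1 := min_le_right _ _
          have hRP : Phi R < w := hR₀ R (min_le_left _ _)
          have hc1 := hmlim.eventually_const_lt (show (m+t)/2 < m by linarith)
          have hc2 := hslim.eventually_lt_const
            (show sl < (m-t)/(2*(-R)) from by rw [← hz]; exact div_pos (by linarith) (by linarith))
          filter_upwards [hc1, hc2] with k hk1 hk2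
          rw [hFn]
          by_cases hv : vs (ψ k) = 0
          · rw [if_pos hv, if_neg (by linarith : ¬ ms (ψ k) ≤ t)]; linarith
          · rw [if_neg hv]
            have hsp := hsv _ hv
            have hle : (t - ms (ψ k)) / s (ψ k) ≤ R := by
              rw [div_le_iff₀ hsp]
              have h2 := (lt_div_iff₀ (by linarith : (0:ℝ) < 2*(-R))).1 hk2
              nlinarith
            exact lt_of_le_of_lt (Phi_mono hle) hRP
      have hFt : F t = 0 := tendsto_nhds_unique (hconvψ t htT) hzero
      rw [show (μY (Set.Iic t)).toReal = F t from rfl, hFt,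
        Measure.dirac_apply' _ measurableSet_Iic,
        Set.indicator_of_notMem (by simp only [Set.mem_Iic, not_le]; linarith)]
      simp
    · have hone : Filter.Tendsto (fun k => Fn (ψ k) t) Filter.atTop (nhds 1) := by
        refine tendsto_order.2 ⟨?_, ?_⟩
        · intro l hl
          obtain ⟨R₀, hR₀⟩ := (Phi_tendsto_atTop.eventually_const_lt hl).exists_forall_of_atTop
          set R := max R₀ 1 with hRdef
          have hR1 : (1:ℝ) ≤ R := le_max_right _ _
          have hRP : l < Phi R := hR₀ R (le_max_left _ _)
          have hc1 := hmlim.eventually_lt_const (show m < (m+t)/2 by linarith)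
          have hc2 := hslim.eventually_lt_const
            (show sl < (t-m)/(2*R) from by rw [← hz]; exact div_pos (by linarith) (by linarith))
          filter_upwards [hc1, hc2] with k hk1 hk2
          rw [hFn]
          by_cases hv : vs (ψ k) = 0
          · rw [if_pos hv, if_pos (by linarith : ms (ψ k) ≤ t)]; linarith
          · rw [if_neg hv]
            have hsp := hsv _ hv
            have hRle : R ≤ (t - ms (ψ k)) / s (ψ k) := by
              rw [le_div_iff₀ hsp]
              have h2 := (lt_div_iff₀ (by linarith : (0:ℝ) < 2*R)).1 hk2
              nlinarith
            exact lt_of_lt_of_le hRP (Phi_mono hRle)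
        · intro w hw
          exact Filter.Eventually.of_forall fun k => lt_of_le_of_lt (hFn01 _ _).2 hw
      have hFt : F t = 1 := tendsto_nhds_unique (hconvψ t htT) hone
      rw [show (μY (Set.Iic t)).toReal = F t from rfl, hFt,
        Measure.dirac_apply_of_mem (Set.mem_Iic.2 hgt.le)]
      simp
  · -- nondegenerate limit
    have hcoe : (vl:ℝ) = sl^2 := rfl
    have hvne : vl ≠ 0 := by
      intro hc
      rw [hc] at hcoe
      simp only [NNReal.coe_zero] at hcoe
      nlinarith [pow_pos hpos 2]
    have hsqrt : Real.sqrt vl = sl := by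
      rw [hcoe]
      exact Real.sqrt_sq hpos.le
    show μY = gaussianReal m vl
    refine measure_ext_of_cdf_on μY (gaussianReal m vl) T hTc ?_
    intro t ht
    refine (ENNReal.toReal_eq_toReal_iff' (measure_ne_top _ _) (measure_ne_top _ _)).1 ?_
    have h2 : Filter.Tendsto (fun k => Phi ((t - ms (ψ k)) / s (ψ k))) Filter.atTop
        (nhds (Phi ((t - m) / sl))) :=
      (Phi_continuous.tendsto _).comp ((tendsto_const_nhds.sub hmlim).div hslim hpos.ne')
    have hev : (fun k => Phi ((t - ms (ψ k)) / s (ψ k))) =ᶠ[Filter.atTop]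
        (fun k => Fn (ψ k) t) := by
      filter_upwards [hslim.eventually_const_lt (half_lt_self hpos)] with k hk
      have hsp : 0 < s (ψ k) := lt_trans (half_pos hpos) hk
      have hvk : vs (ψ k) ≠ 0 := by
        intro hc
        rw [hs_def] at hsp
        simp only [hc] at hsp
        simp at hsp
      rw [hFn, if_neg hvk]
    have h3 := h2.congr' hev
    have hFt : F t = Phi ((t - m) / sl) := tendsto_nhds_unique (hconvψ t ht) h3
    rw [show (μY (Set.Iic t)).toReal = F t from rfl, hFt, cdf_gaussian_eq m vl hvne t, hsqrt]

theorem stmt6 {V Ω : Type*} [AddCommGroup V] [Module ℝ V] [MeasurableSpace Ω]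
    (P : Measure Ω) [IsProbabilityMeasure P]
    (L : Submodule ℝ (Module.Dual ℝ V))
    (hsep : ∀ v : V, v ≠ 0 → ∃ ℓ ∈ L, ℓ v ≠ 0)
    (D : Set (Module.Dual ℝ V)) (hDL : D ⊆ L) (n₀ : ℕ)
    (hcl : scl^[n₀] ((Submodule.span ℝ D : Submodule ℝ (Module.Dual ℝ V)) :
        Set (Module.Dual ℝ V)) = L)
    (u : Ω → V)
    (hmeas : ∀ ℓ ∈ D, Measurable fun ω => ℓ (u ω))
    (hGauss : ∀ (n : ℕ) (ℓs : Fin n → Module.Dual ℝ V), (∀ i, ℓs i ∈ D) →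
      ∀ c : Fin n → ℝ, IsGaussianRV P fun ω => ∑ i, c i * ℓs i (u ω)) :
    (@Measurable Ω V _
      (⨆ ℓ ∈ (L : Set (Module.Dual ℝ V)),
        MeasurableSpace.comap (ℓ : V → ℝ) inferInstance) u) ∧
    ∀ ℓ ∈ L, IsGaussianRV P fun ω => ℓ (u ω) := by
  classical
  have hspan : ∀ ℓ ∈ ((Submodule.span ℝ D : Submodule ℝ (Module.Dual ℝ V)) :
      Set (Module.Dual ℝ V)),
      Measurable (fun ω => ℓ (u ω)) ∧ IsGaussianRV P (fun ω => ℓ (u ω)) := by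
    intro ℓ hℓ
    obtain ⟨c, hsupp, hsum⟩ := Submodule.mem_span_set.1 hℓ
    set n := c.support.card with hn
    set e : {x // x ∈ c.support} ≃ Fin n := c.support.equivFin with he
    set ℓs : Fin n → Module.Dual ℝ V := fun i => (e.symm i : Module.Dual ℝ V) with hℓs
    set cs : Fin n → ℝ := fun i => c (e.symm i) with hcs
    have hmem : ∀ i, ℓs i ∈ D := fun i => hsupp (e.symm i).2
    have key : ∀ w, ℓ w = ∑ i, cs i * ℓs i w := by
      intro w
      have h1 : ℓ = ∑ x ∈ c.support, c x • x := by
        rw [← hsum]; rfl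
      have h2 : ℓ w = ∑ x ∈ c.support, c x * x w := by
        rw [h1, LinearMap.sum_apply]
        exact Finset.sum_congr rfl fun x _ => by rw [LinearMap.smul_apply, smul_eq_mul]
      rw [h2, ← Finset.sum_coe_sort]
      exact Fintype.sum_equiv e (fun x => c x * (x : Module.Dual ℝ V) w)
        (fun i => cs i * ℓs i w) (fun x => by simp [hcs, hℓs, e.symm_apply_apply])
    have hfun : (fun ω => ℓ (u ω)) = fun ω => ∑ i, cs i * ℓs i (u ω) :=
      funext fun ω => key (u ω)
    constructor
    · rw [hfun]
      exact Finset.measurable_sum _ fun i _ =>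
        measurable_const.mul (hmeas (ℓs i) (hmem i))
    · rw [hfun]
      exact hGauss n ℓs hmem cs
  have hstep : ∀ (S : Set (Module.Dual ℝ V)),
      (∀ ℓ ∈ S, Measurable (fun ω => ℓ (u ω)) ∧ IsGaussianRV P (fun ω => ℓ (u ω))) →
      ∀ ℓ ∈ scl S, Measurable (fun ω => ℓ (u ω)) ∧ IsGaussianRV P (fun ω => ℓ (u ω)) := by
    intro S hS ℓ hℓ
    obtain ⟨g, hgS, hgt⟩ := hℓ
    have hXm : ∀ n, Measurable fun ω => g n (u ω) := fun n => (hS (g n) (hgS n)).1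
    have hXg : ∀ n, ∃ (m : ℝ) (v : NNReal),
        Measure.map (fun ω => g n (u ω)) P = gaussianReal m v := fun n => (hS (g n) (hgS n)).2
    have hlim' : ∀ ω, Filter.Tendsto (fun n => g n (u ω)) Filter.atTop (nhds (ℓ (u ω))) :=
      fun ω => hgt (u ω)
    exact ⟨measurable_of_tendsto_metrizable hXm (tendsto_pi_nhds.2 hlim'),
      isGaussian_limit P (fun n ω => g n (u ω)) (fun ω => ℓ (u ω)) hXm hXg hlim'⟩
  have hiter : ∀ k, ∀ ℓ ∈ scl^[k] ((Submodule.span ℝ D : Submodule ℝ (Module.Dual ℝ V)) :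
      Set (Module.Dual ℝ V)),
      Measurable (fun ω => ℓ (u ω)) ∧ IsGaussianRV P (fun ω => ℓ (u ω)) := by
    intro k
    induction k with
    | zero => simpa using hspan
    | succ k ih =>
      rw [Function.iterate_succ_apply']
      exact hstep _ ih
  have hL : ∀ ℓ ∈ (L : Set (Module.Dual ℝ V)),
      Measurable (fun ω => ℓ (u ω)) ∧ IsGaussianRV P (fun ω => ℓ (u ω)) := by
    rw [← hcl]
    exact hiter n₀
  constructor
  · rw [measurable_iff_comap_le, MeasurableSpace.comap_iSup]
    refine iSup_le fun ℓ => ?_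
    rw [MeasurableSpace.comap_iSup]
    refine iSup_le fun hℓ => ?_
    rw [MeasurableSpace.comap_comp]
    exact Measurable.comap_le (hL ℓ hℓ).1
  · exact fun ℓ hℓ => (hL ℓ hℓ).2
end

section
/- Let H be a separable real Hilbert space, G ⊆ L²(Ω,𝒜,ℙ) a Gaussian Hilbert space, and Ξ : A → (H → G) an operator-valued Gaussian process (each Ξ(a) a bounded linear operator) with mean m : A → H and covariance kernel k : A × A → (H → H) such that k(a,a) is trace class for every a ∈ A. Then there exists an H-valued Gaussian process h on (Ω,𝒜,ℙ) with mean function m and covariance function k such that for all a ∈ A and u ∈ H, ⟨u, h(a)⟩_H = Ξ(a)(u) almost surely (as elements of L²). -/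
open MeasureTheory ProbabilityTheory Filter
open scoped ENNReal NNReal

lemma coeFn_finset_sum' {Ω : Type*} [MeasurableSpace Ω] {P : Measure Ω} {ι : Type*}
    (s : Finset ι) (f : ι → Lp ℝ 2 P) :
    ((∑ i ∈ s, f i : Lp ℝ 2 P) : Ω → ℝ) =ᵐ[P] fun ω => ∑ i ∈ s, (f i : Ω → ℝ) ω := by
  classical
  induction s using Finset.induction_on with
  | empty => simp only [Finset.sum_empty]; exact Lp.coeFn_zero ℝ 2 P
  | insert a s' h ih =>
    filter_upwards [Lp.coeFn_add (f a) (∑ i ∈ s', f i), ih] with ω h1 h2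
    rw [Finset.sum_insert h, h1, Pi.add_apply, h2, Finset.sum_insert h]

lemma kl_key {Ω H : Type*} [NormedAddCommGroup H] [InnerProductSpace ℝ H]
    [CompleteSpace H] [MeasurableSpace Ω] (P : Measure Ω) [IsProbabilityMeasure P]
    (T : H →L[ℝ] Lp ℝ 2 P)
    (ψ : ℕ → H) (lam : ℕ → ℝ) (honb : Orthonormal ℝ ψ) (hlam0 : ∀ i, 0 ≤ lam i)
    (hspan : Submodule.topologicalClosure (Submodule.span ℝ (Set.range ψ)) = ⊤)
    (hsum : Summable lam)
    (hvar : ∀ i, ∫ ω, ((T (ψ i)) : Ω → ℝ) ω ^ 2 ∂P = lam i) :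
    ∃ g : Ω → H, ∀ u : H, (fun ω => (inner ℝ u (g ω) : ℝ)) =ᵐ[P] (T u : Ω → ℝ) := by
  classical
  set ξ : ℕ → Ω → ℝ := fun i => (T (ψ i) : Ω → ℝ) with hξ
  have hξmeas : ∀ i, Measurable (ξ i) := fun i => (Lp.stronglyMeasurable _).measurable
  have hInt : ∀ i, Integrable (fun ω => ξ i ω ^ 2) P := fun i => (Lp.memLp _).integrable_sq
  -- a.e. square-summability
  have hae : ∀ᵐ ω ∂P, Summable fun i => ξ i ω ^ 2 := by
    have hmeas : ∀ i, Measurable fun ω => ENNReal.ofReal (ξ i ω ^ 2) :=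
      fun i => ((hξmeas i).pow_const 2).ennreal_ofReal
    have h1 : ∫⁻ ω, ∑' i, ENNReal.ofReal (ξ i ω ^ 2) ∂P
        = ∑' i, ∫⁻ ω, ENNReal.ofReal (ξ i ω ^ 2) ∂P :=
      lintegral_tsum fun i => (hmeas i).aemeasurable
    have h2 : ∀ i, ∫⁻ ω, ENNReal.ofReal (ξ i ω ^ 2) ∂P = ENNReal.ofReal (lam i) := fun i => by
      rw [← ofReal_integral_eq_lintegral_ofReal (hInt i) (ae_of_all _ fun ω => sq_nonneg _),
        hvar i]
    have h4 : ∫⁻ ω, ∑' i, ENNReal.ofReal (ξ i ω ^ 2) ∂P ≠ ⊤ := by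
      rw [h1]
      simp only [h2]
      rw [← ENNReal.ofReal_tsum_of_nonneg hlam0 hsum]
      exact ENNReal.ofReal_ne_top
    have h5 := ae_lt_top (by exact Measurable.ennreal_tsum hmeas) h4
    filter_upwards [h5] with ω hω
    have := ENNReal.summable_toReal hω.ne
    simpa [ENNReal.toReal_ofReal (sq_nonneg _)] using this
  set b : HilbertBasis ℕ ℝ H := HilbertBasis.mk honb (le_of_eq hspan.symm) with hb
  have hbcoe : ∀ i, b i = ψ i := fun i => by rw [hb, HilbertBasis.coe_mk]
  set g : Ω → H := fun ω => ∑' i, ξ i ω • ψ i with hg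
  have hgsum : ∀ᵐ ω ∂P, HasSum (fun i => ξ i ω • ψ i) (g ω) := by
    filter_upwards [hae] with ω hω
    have hmem : Memℓp (fun i => ξ i ω) 2 := by
      apply memℓp_gen
      have : (fun i => ‖ξ i ω‖ ^ (2 : ℝ≥0∞).toReal) = fun i => ξ i ω ^ 2 := by
        funext i
        rw [ENNReal.toReal_ofNat,
          show ((2:ℝ)) = ((2:ℕ):ℝ) from by norm_num, Real.rpow_natCast,
          Real.norm_eq_abs, sq_abs]
      rw [this]; exact hω
    have hs := b.hasSum_repr_symm (⟨fun i => ξ i ω, hmem⟩ : lp (fun _ : ℕ => ℝ) 2)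
    have hsummable : Summable (fun i => ξ i ω • ψ i) := by
      refine ⟨b.repr.symm (⟨fun i => ξ i ω, hmem⟩ : lp (fun _ : ℕ => ℝ) 2), ?_⟩
      have heq : (fun i => ((⟨fun i => ξ i ω, hmem⟩ : lp (fun _ : ℕ => ℝ) 2) : ∀ _ : ℕ, ℝ) i • b i)
          = fun i => ξ i ω • ψ i := by
        funext i
        rw [hbcoe i]
      rw [← heq]
      exact hs
    exact hsummable.hasSum
  refine ⟨g, fun u => ?_⟩
  -- L² side
  have hL2 : HasSum (fun i => b.repr u i • T (ψ i)) (T u) := by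
    have h := (b.hasSum_repr u).mapL T
    simpa [hbcoe, _root_.map_smul] using h
  set S : ℕ → Lp ℝ 2 P := fun n => ∑ i ∈ Finset.range n, b.repr u i • T (ψ i) with hS
  have hTend : Tendsto S atTop (nhds (T u)) := hL2.tendsto_sum_nat
  have hel : Tendsto (fun n => eLpNorm ((S n : Ω → ℝ) - (T u : Ω → ℝ)) 2 P) atTop (nhds 0) := by
    have heq : ∀ n, eLpNorm ((S n : Ω → ℝ) - (T u : Ω → ℝ)) 2 P
        = ENNReal.ofReal ‖S n - T u‖ := fun n => by
      rw [← eLpNorm_congr_ae (Lp.coeFn_sub (S n) (T u)), Lp.norm_def,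
        ENNReal.ofReal_toReal (Lp.eLpNorm_ne_top _)]
    simp only [heq]
    have : Tendsto (fun n => ‖S n - T u‖) atTop (nhds 0) :=
      (tendsto_iff_norm_sub_tendsto_zero.mp hTend)
    simpa using (ENNReal.tendsto_ofReal this)
  have hTIM : TendstoInMeasure P (fun n => (S n : Ω → ℝ)) atTop (T u : Ω → ℝ) :=
    tendstoInMeasure_of_tendsto_eLpNorm (by norm_num) (fun n => Lp.aestronglyMeasurable _)
      (Lp.aestronglyMeasurable _) hel
  obtain ⟨ns, hns_mono, hns_ae⟩ := hTIM.exists_seq_tendsto_ae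
  have hSn_ae : ∀ᵐ ω ∂P, ∀ n, (S n : Ω → ℝ) ω = ∑ i ∈ Finset.range n, b.repr u i * ξ i ω := by
    rw [ae_all_iff]
    intro n
    have h1 := coeFn_finset_sum' (Finset.range n) (fun i => b.repr u i • T (ψ i))
    have h2 : ∀ i, (↑(b.repr u i • T (ψ i)) : Ω → ℝ) =ᵐ[P] fun ω => b.repr u i * ξ i ω :=
      fun i => by filter_upwards [Lp.coeFn_smul (b.repr u i) (T (ψ i))] with ω h
                  simpa using h
    have h3 : ∀ᵐ ω ∂P, ∀ i ∈ Finset.range n, (↑(b.repr u i • T (ψ i)) : Ω → ℝ) ω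
        = b.repr u i * ξ i ω := by
      rw [ae_all_iff]; intro i; filter_upwards [h2 i] with ω h; intro _; exact h
    filter_upwards [h1, h3] with ω hω1 hω2
    rw [hω1]; exact Finset.sum_congr rfl hω2
  -- pointwise side
  have hpt : ∀ᵐ ω ∂P, HasSum (fun i => b.repr u i * ξ i ω) (inner ℝ u (g ω) : ℝ) := by
    filter_upwards [hgsum] with ω hω
    have h := hω.mapL (innerSL ℝ u)
    have heq : (fun i => (innerSL ℝ u) (ξ i ω • ψ i)) = fun i => b.repr u i * ξ i ω := by
      funext i
      simp only [innerSL_apply_apply, real_inner_smul_right]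
      rw [hb, HilbertBasis.repr_apply_apply, hbcoe, real_inner_comm]
      ring
    rw [heq] at h
    simpa using h
  filter_upwards [hns_ae, hSn_ae, hpt] with ω h1 h2 h3
  have hA : Tendsto (fun j => ∑ i ∈ Finset.range (ns j), b.repr u i * ξ i ω) atTop
      (nhds ((T u : Ω → ℝ) ω)) := by
    have := h1
    simpa [h2] using this
  have hB : Tendsto (fun j => ∑ i ∈ Finset.range (ns j), b.repr u i * ξ i ω) atTop
      (nhds (inner ℝ u (g ω) : ℝ)) :=
    h3.tendsto_sum_nat.comp hns_mono.tendsto_atTop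
  exact tendsto_nhds_unique hB hA


theorem stmt17 {A Ω H : Type*} [NormedAddCommGroup H] [InnerProductSpace ℝ H]
    [CompleteSpace H] [TopologicalSpace.SeparableSpace H] [MeasurableSpace Ω]
    (P : Measure Ω) [IsProbabilityMeasure P]
    -- G ⊆ L²(Ω,ℙ) a Gaussian Hilbert space (closed, all elements Gaussian)
    (G : Submodule ℝ (Lp ℝ 2 P)) (hGclosed : IsClosed (G : Set (Lp ℝ 2 P)))
    (hGgauss : ∀ g ∈ G, ∃ (mg : ℝ) (vg : NNReal),
      Measure.map (g : Ω → ℝ) P = gaussianReal mg vg)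
    -- Ξ : A → (H → G) an operator-valued Gaussian process
    (Ξ : A → H →L[ℝ] Lp ℝ 2 P) (hrange : ∀ (a : A) (u : H), Ξ a u ∈ G)
    -- with mean m and covariance kernel k
    (m : A → H)
    (hm : ∀ (a : A) (u : H), ∫ ω, (Ξ a u : Ω → ℝ) ω ∂P = (inner ℝ u (m a) : ℝ))
    (k : A → A → H →L[ℝ] H)
    (hk : ∀ (a₁ a₂ : A) (u₁ u₂ : H),
      ∫ ω, ((Ξ a₁ u₁ : Ω → ℝ) ω - (inner ℝ u₁ (m a₁) : ℝ)) *
            ((Ξ a₂ u₂ : Ω → ℝ) ω - (inner ℝ u₂ (m a₂) : ℝ)) ∂P = (inner ℝ u₁ (k a₁ a₂ u₂) : ℝ))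
    (hksym : ∀ (a₁ a₂ : A) (u₁ u₂ : H),
      (inner ℝ u₁ (k a₁ a₂ u₂) : ℝ) = (inner ℝ (k a₂ a₁ u₁) u₂ : ℝ))
    -- k(a,a) trace class for every a (spectral characterization)
    (htr : ∀ a : A, ∃ (ψ : ℕ → H) (lam : ℕ → ℝ), Orthonormal ℝ ψ ∧
      (∀ i, 0 ≤ lam i) ∧ (∀ i, k a a (ψ i) = lam i • ψ i) ∧
      Submodule.topologicalClosure (Submodule.span ℝ (Set.range ψ)) = ⊤ ∧ Summable lam) :
    -- then there is an H-valued Gaussian process h with mean m and covariance k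
    -- such that ⟨u, h(a)⟩ = Ξ(a)(u) almost surely
    ∃ h : A → Ω → H,
      (∀ (a : A) (u : H),
        (fun ω => (inner ℝ u (h a ω) : ℝ)) =ᵐ[P] (Ξ a u : Ω → ℝ)) ∧
      (∀ (n : ℕ) (as : Fin n → A) (us : Fin n → H),
        ∃ (mg : ℝ) (vg : NNReal),
          Measure.map (fun ω => ∑ i, (inner ℝ (us i) (h (as i) ω) : ℝ)) P =
            gaussianReal mg vg) ∧
      (∀ (a : A) (u : H), ∫ ω, (inner ℝ u (h a ω) : ℝ) ∂P = (inner ℝ u (m a) : ℝ)) ∧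
      (∀ (a₁ a₂ : A) (u₁ u₂ : H),
        ∫ ω, ((inner ℝ u₁ (h a₁ ω) : ℝ) - (inner ℝ u₁ (m a₁) : ℝ)) *
              ((inner ℝ u₂ (h a₂ ω) : ℝ) - (inner ℝ u₂ (m a₂) : ℝ)) ∂P =
          (inner ℝ u₁ (k a₁ a₂ u₂) : ℝ)) := by
    classical
  have key : ∀ a : A, ∃ g : Ω → H,
      ∀ u : H, (fun ω => (inner ℝ u (g ω) : ℝ)) =ᵐ[P] (Ξ a u : Ω → ℝ) := by
    intro a
    obtain ⟨ψ, lam, honb, hlam0, heig, hspan, hsum⟩ := htr a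
    set T : H →L[ℝ] Lp ℝ 2 P := Ξ a - (Lp.constL 2 P ℝ).comp (innerSL ℝ (m a)) with hTdef
    have hTcoe : ∀ u : H, (T u : Ω → ℝ)
        =ᵐ[P] fun ω => (Ξ a u : Ω → ℝ) ω - (inner ℝ u (m a) : ℝ) := by
      intro u
      have h0 : T u = Ξ a u - Lp.const 2 P (inner ℝ (m a) u : ℝ) := by
        rw [hTdef]
        simp [ContinuousLinearMap.sub_apply, ContinuousLinearMap.comp_apply, Lp.constL_apply]
      rw [h0]
      filter_upwards [Lp.coeFn_sub (Ξ a u) (Lp.const 2 P (inner ℝ (m a) u : ℝ)),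
        Lp.coeFn_const 2 P (inner ℝ (m a) u : ℝ)] with ω h1 h2
      rw [h1, Pi.sub_apply, h2, real_inner_comm]
      rfl
    have hvar : ∀ i, ∫ ω, ((T (ψ i)) : Ω → ℝ) ω ^ 2 ∂P = lam i := by
      intro i
      have h1 : ∫ ω, ((T (ψ i)) : Ω → ℝ) ω ^ 2 ∂P
          = ∫ ω, ((Ξ a (ψ i) : Ω → ℝ) ω - (inner ℝ (ψ i) (m a) : ℝ)) *
              ((Ξ a (ψ i) : Ω → ℝ) ω - (inner ℝ (ψ i) (m a) : ℝ)) ∂P := by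
        apply integral_congr_ae
        filter_upwards [hTcoe (ψ i)] with ω h
        rw [h]; ring
      rw [h1, hk a a (ψ i) (ψ i), heig i, real_inner_smul_right]
      have : (inner ℝ (ψ i) (ψ i) : ℝ) = 1 := by
        rw [real_inner_self_eq_norm_mul_norm, honb.1 i]; norm_num
      rw [this, mul_one]
    obtain ⟨g, hg⟩ := kl_key P T ψ lam honb hlam0 hspan hsum hvar
    refine ⟨fun ω => m a + g ω, fun u => ?_⟩
    filter_upwards [hg u, hTcoe u] with ω h1 h2
    simp only [inner_add_right]
    rw [h1, h2]
    ring
  choose h hh using key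
  refine ⟨h, hh, ?_, ?_, ?_⟩
  · intro n as us
    have hFG : (∑ i, Ξ (as i) (us i)) ∈ G :=
      Submodule.sum_mem G fun i _ => hrange (as i) (us i)
    obtain ⟨mg, vg, hmap⟩ := hGgauss _ hFG
    refine ⟨mg, vg, ?_⟩
    rw [← hmap]
    apply Measure.map_congr
    have h1 := coeFn_finset_sum' Finset.univ (fun i => Ξ (as i) (us i))
    have h2 : ∀ᵐ ω ∂P, ∀ i : Fin n, (inner ℝ (us i) (h (as i) ω) : ℝ)
        = (Ξ (as i) (us i) : Ω → ℝ) ω := by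
      rw [ae_all_iff]
      intro i
      exact hh (as i) (us i)
    filter_upwards [h1, h2] with ω hω1 hω2
    rw [hω1]
    exact Finset.sum_congr rfl fun i _ => hω2 i
  · intro a u
    rw [integral_congr_ae (hh a u)]
    exact hm a u
  · intro a₁ a₂ u₁ u₂
    rw [← hk a₁ a₂ u₁ u₂]
    apply integral_congr_ae
    filter_upwards [hh a₁ u₁, hh a₂ u₂] with ω e1 e2
    rw [e1, e2]
end
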